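/- Let k₁, k₂ ∈ ℝ, and let x₁, x₂, d, d̂, a, b, u : ℝ → ℝ be functions such that x₁, x₂, d, d̂ are differentiable, b(t) ≠ 0 for all t, and for all t: x₁'(t) = x₂(t) + d(t), x₂'(t) = a(t) + b(t)·u(t), and u(t) = -b(t)⁻¹·(a(t) + k₁·x₁(t) + k₂·(x₂(t) + d̂(t)) + d̂'(t)). Then, with e(t) = d(t) − d̂(t), x₁ is twice differentiable and x₁''(t) + k₂·x₁'(t) + k₁·x₁(t) = k₂·e(t) + e'(t) for all t. -/
import Mathlib


/-- FLC based on the self-learning disturbance observer (FLC-SLDO):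
u = -b⁻¹(a + k₁x₁ + k₂(x₂ + d̂) + d̂') applied to ẋ₁ = x₂ + d,
ẋ₂ = a + b·u yields, with e = d − d̂, the closed loop
ẍ₁ + k₂ẋ₁ + k₁x₁ = k₂e + ė (equation (52)). -/
theorem stmt_15 (k₁ k₂ : ℝ) (x₁ x₂ d dhat a b u : ℝ → ℝ)
    (hx₁ : Differentiable ℝ x₁) (hx₂ : Differentiable ℝ x₂)
    (hd : Differentiable ℝ d) (hdhat : Differentiable ℝ dhat)
    (hb : ∀ t, b t ≠ 0)
    (hdx₁ : ∀ t, deriv x₁ t = x₂ t + d t)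
    (hdx₂ : ∀ t, deriv x₂ t = a t + b t * u t)
    (hu : ∀ t, u t = -(b t)⁻¹ *
      (a t + k₁ * x₁ t + k₂ * (x₂ t + dhat t) + deriv dhat t)) :
    Differentiable ℝ (deriv x₁) ∧
    ∀ t, deriv (deriv x₁) t + k₂ * deriv x₁ t + k₁ * x₁ t =
      k₂ * (d t - dhat t) + deriv (fun τ => d τ - dhat τ) t := by
  have heq : deriv x₁ = fun t => x₂ t + d t := funext hdx₁
  have hdiff : Differentiable ℝ (deriv x₁) := by
    rw [heq]; exact hx₂.add hd
  refine ⟨hdiff, fun t => ?_⟩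
  have h1 : deriv (deriv x₁) t = deriv x₂ t + deriv d t := by
    rw [heq]; exact deriv_add (hx₂ t) (hd t)
  have h2 : deriv (fun τ => d τ - dhat τ) t = deriv d t - deriv dhat t :=
    deriv_sub (hd t) (hdhat t)
  have h3 : b t * u t = -(a t + k₁ * x₁ t + k₂ * (x₂ t + dhat t) + deriv dhat t) := by
    rw [hu t]; field_simp [hb t]
  rw [h1, h2, hdx₂, h3, hdx₁]
  ring
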